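/- arXiv:2010.04317 — 4 statements merged into one kernel-verified Lean document; each statement's English description precedes it below -/
import Mathlib

section
/- Let n and d be integers with 1 ≤ d < n, let 𝔉 be a nonempty family of d-element subsets of [n], and let Δ be the simplicial complex generated by 𝔉 (so F(Δ) = 𝔉). Then Δ is an f-simplicial complex if and only if 𝔉 is an LU-set and 2·|𝔉| = C(n,d) (the binomial coefficient n choose d). -/
open Finset

/-- `Δ`, given as the finset of its faces, is a simplicial complex on the vertex
set `Fin n`: a nonempty collection of subsets closed under taking subsets. -/
def IsComplex {n : ℕ} (Δ : Finset (Finset (Fin n))) : Prop :=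
  Δ.Nonempty ∧ ∀ A ∈ Δ, ∀ B ⊆ A, B ∈ Δ

/-- The facets (maximal faces) of `Δ`. -/
def facets {n : ℕ} (Δ : Finset (Finset (Fin n))) : Finset (Finset (Fin n)) :=
  Δ.filter fun F => ∀ G ∈ Δ, F ⊆ G → F = G

/-- The simplicial complex generated by a family `𝔉`: all subsets of members of `𝔉`. -/
def generated {n : ℕ} (𝔉 : Finset (Finset (Fin n))) : Finset (Finset (Fin n)) :=
  univ.filter fun A => ∃ F ∈ 𝔉, A ⊆ F

/-- The Newton complement dual `Δ^c`: the complex generated by the complements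
of the facets of `Δ`. -/
def cdual {n : ℕ} (Δ : Finset (Finset (Fin n))) : Finset (Finset (Fin n)) :=
  generated ((facets Δ).image fun F => Fᶜ)

/-- The nonface complex of `Δ`: all subsets of `[n]` containing no facet of `Δ`. -/
def nonfaceComplex {n : ℕ} (Δ : Finset (Finset (Fin n))) : Finset (Finset (Fin n)) :=
  univ.filter fun A => ∀ F ∈ facets Δ, ¬ F ⊆ A

/-- `Δ` is an `f`-simplicial complex: for every `k`, `Δ` and its nonface complex
have the same number of `k`-element members (the same `f`-vector). -/
def IsFComplex {n : ℕ} (Δ : Finset (Finset (Fin n))) : Prop :=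
  ∀ k : ℕ, (Δ.filter fun A => A.card = k).card =
    ((nonfaceComplex Δ).filter fun A => A.card = k).card

/-- `Δ` is pure `(d-1)`-dimensional: every facet has exactly `d` elements. -/
def PureDim {n : ℕ} (d : ℕ) (Δ : Finset (Finset (Fin n))) : Prop :=
  ∀ F ∈ facets Δ, F.card = d

/-- The minimal nonfaces of `Δ`: sets that are not faces but all of whose proper
subsets are faces. -/
def minNonfaces {n : ℕ} (Δ : Finset (Finset (Fin n))) : Finset (Finset (Fin n)) :=
  univ.filter fun A => A ∉ Δ ∧ ∀ B ⊂ A, B ∈ Δ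

/-- The Alexander dual `Δ^∨`: the complex whose facets are the complements of the
minimal nonfaces of `Δ`. -/
def adual {n : ℕ} (Δ : Finset (Finset (Fin n))) : Finset (Finset (Fin n)) :=
  generated ((minNonfaces Δ).image fun F => Fᶜ)

/-- The homogeneous complement `Δ'` (in degree `e`): the complex generated by the
`e`-element subsets of `[n]` that are not facets of `Δ`. -/
def hcompl {n : ℕ} (e : ℕ) (Δ : Finset (Finset (Fin n))) : Finset (Finset (Fin n)) :=
  generated (univ.filter fun A : Finset (Fin n) => A.card = e ∧ A ∉ facets Δ)

/-- `𝔉` is an L-set: every `(d-1)`-element subset of `[n]` is contained in some member. -/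
def IsLSet {n : ℕ} (d : ℕ) (𝔉 : Finset (Finset (Fin n))) : Prop :=
  ∀ A : Finset (Fin n), A.card = d - 1 → ∃ F ∈ 𝔉, A ⊆ F

/-- `𝔉` is a U-set: every `(d+1)`-element subset of `[n]` contains some member. -/
def IsUSet {n : ℕ} (d : ℕ) (𝔉 : Finset (Finset (Fin n))) : Prop :=
  ∀ A : Finset (Fin n), A.card = d + 1 → ∃ F ∈ 𝔉, F ⊆ A

/-- `𝔉` is an LU-set: both an L-set and a U-set. -/
def IsLUSet {n : ℕ} (d : ℕ) (𝔉 : Finset (Finset (Fin n))) : Prop :=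
  IsLSet d 𝔉 ∧ IsUSet d 𝔉

lemma mem_generated {n : ℕ} {𝔉 : Finset (Finset (Fin n))} {A : Finset (Fin n)} :
    A ∈ generated 𝔉 ↔ ∃ F ∈ 𝔉, A ⊆ F := by simp [generated]

lemma facets_generated {n d : ℕ} {𝔉 : Finset (Finset (Fin n))}
    (hcard : ∀ F ∈ 𝔉, F.card = d) : facets (generated 𝔉) = 𝔉 := by
  ext A
  simp only [facets, mem_filter]
  constructor
  · rintro ⟨hA, hmax⟩
    obtain ⟨F, hF, hAF⟩ := mem_generated.1 hA
    have := hmax F (mem_generated.2 ⟨F, hF, Subset.rfl⟩) hAF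
    subst this; exact hF
  · intro hA
    refine ⟨mem_generated.2 ⟨A, hA, Subset.rfl⟩, ?_⟩
    intro G hG hAG
    obtain ⟨F, hF, hGF⟩ := mem_generated.1 hG
    have h1 : A = F := eq_of_subset_of_card_le (hAG.trans hGF)
      (by rw [hcard A hA, hcard F hF])
    subst h1
    exact Subset.antisymm hAG hGF

lemma card_filter_card_eq {n k : ℕ} :
    ((univ : Finset (Finset (Fin n))).filter fun A => A.card = k).card = n.choose k := by
  rw [← Finset.powerset_univ, ← Finset.powersetCard_eq_filter,
    Finset.card_powersetCard, Finset.card_univ, Fintype.card_fin]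

/-- the complex generated by a nonempty family `𝔉` of `d`-element subsets
of `[n]` is an `f`-simplicial complex iff `𝔉` is an LU-set and `2|𝔉| = C(n,d)`. -/
theorem stmt0 {n d : ℕ} (hd : 1 ≤ d) (hdn : d < n)
    (𝔉 : Finset (Finset (Fin n))) (hne : 𝔉.Nonempty)
    (hcard : ∀ F ∈ 𝔉, F.card = d) :
    IsFComplex (generated 𝔉) ↔ IsLUSet d 𝔉 ∧ 2 * 𝔉.card = n.choose d := by
  have hfac : facets (generated 𝔉) = 𝔉 := facets_generated hcard
  have hnf : ∀ A : Finset (Fin n),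
      A ∈ nonfaceComplex (generated 𝔉) ↔ ∀ F ∈ 𝔉, ¬ F ⊆ A := by
    intro A; simp [nonfaceComplex, hfac]
  -- the k=d counting facts, valid unconditionally
  have hG1d : (generated 𝔉).filter (fun A => A.card = d) = 𝔉 := by
    ext A
    simp only [mem_filter, mem_generated]
    constructor
    · rintro ⟨⟨F, hF, hAF⟩, hAd⟩
      have : A = F := eq_of_subset_of_card_le hAF (by rw [hAd, hcard F hF])
      subst this; exact hF
    · intro hA; exact ⟨⟨A, hA, Subset.rfl⟩, hcard A hA⟩
  have h𝔉sub : 𝔉 ⊆ univ.filter (fun A : Finset (Fin n) => A.card = d) := by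
    intro F hF; simp [hcard F hF]
  have hG2d : (nonfaceComplex (generated 𝔉)).filter (fun A => A.card = d)
      = (univ.filter (fun A : Finset (Fin n) => A.card = d)) \ 𝔉 := by
    ext A
    simp only [mem_filter, mem_sdiff, hnf, mem_univ, true_and]
    constructor
    · rintro ⟨h1, h2⟩
      refine ⟨h2, fun hA => h1 A hA Subset.rfl⟩
    · rintro ⟨h2, h1⟩
      refine ⟨fun F hF hFA => ?_, h2⟩
      have : F = A := eq_of_subset_of_card_le hFA (by rw [hcard F hF, h2])
      subst this; exact h1 hF
  have hG2dcard : ((nonfaceComplex (generated 𝔉)).filter (fun A => A.card = d)).card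
      = n.choose d - 𝔉.card := by
    rw [hG2d, card_sdiff_of_subset h𝔉sub, card_filter_card_eq]
  have h𝔉le : 𝔉.card ≤ n.choose d := by
    calc 𝔉.card ≤ _ := card_le_card h𝔉sub
    _ = n.choose d := card_filter_card_eq
  constructor
  · intro hf
    have hLset : IsLSet d 𝔉 := by
      -- at k = d - 1
      have h2 : (nonfaceComplex (generated 𝔉)).filter (fun A => A.card = d - 1)
          = univ.filter (fun A : Finset (Fin n) => A.card = d - 1) := by
        ext A
        simp only [mem_filter, hnf, mem_univ, true_and, and_iff_right_iff_imp]
        intro hAd F hF hFA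
        have := card_le_card hFA
        rw [hcard F hF, hAd] at this
        omega
      have h1sub : (generated 𝔉).filter (fun A => A.card = d - 1)
          ⊆ univ.filter (fun A : Finset (Fin n) => A.card = d - 1) := by
        intro A hA; simp only [mem_filter] at hA ⊢; exact ⟨mem_univ A, hA.2⟩
      have heq : (generated 𝔉).filter (fun A => A.card = d - 1)
          = univ.filter (fun A : Finset (Fin n) => A.card = d - 1) :=
        eq_of_subset_of_card_le h1sub (by rw [← h2, hf (d - 1)])
      intro A hAd
      have : A ∈ (generated 𝔉).filter (fun A => A.card = d - 1) := by
        rw [heq]; simp [hAd]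
      rw [mem_filter, mem_generated] at this
      exact this.1
    have hUset : IsUSet d 𝔉 := by
      -- at k = d + 1
      have h1 : (generated 𝔉).filter (fun A => A.card = d + 1) = ∅ := by
        ext A
        simp only [mem_filter, mem_generated, notMem_empty, iff_false, not_and]
        rintro ⟨F, hF, hAF⟩ hAd
        have := card_le_card hAF
        rw [hcard F hF, hAd] at this
        omega
      have h2 : (nonfaceComplex (generated 𝔉)).filter (fun A => A.card = d + 1) = ∅ := by
        have := hf (d + 1)
        rw [h1] at this
        simpa [eq_comm] using (card_eq_zero.1 this.symm)
      intro A hAd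
      by_contra hcon
      push_neg at hcon
      have : A ∈ (nonfaceComplex (generated 𝔉)).filter (fun A => A.card = d + 1) := by
        rw [mem_filter, hnf]
        exact ⟨fun F hF hFA => hcon F hF hFA, hAd⟩
      rw [h2] at this
      exact notMem_empty A this
    have hcount : 2 * 𝔉.card = n.choose d := by
      have := hf d
      rw [hG1d, hG2dcard] at this
      omega
    exact ⟨⟨hLset, hUset⟩, hcount⟩
  · rintro ⟨⟨hL, hU⟩, hC⟩
    intro k
    rcases lt_trichotomy k d with hk | hk | hk
    · -- k < d : both sides are all k-sets
      have h1 : (generated 𝔉).filter (fun A => A.card = k)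
          = univ.filter (fun A : Finset (Fin n) => A.card = k) := by
        ext A
        simp only [mem_filter, mem_generated, mem_univ, true_and]
        constructor
        · rintro ⟨_, h⟩; exact h
        · intro hAk
          refine ⟨?_, hAk⟩
          obtain ⟨B, hAB, hBu, hBcard⟩ :=
            Finset.exists_subsuperset_card_eq (subset_univ A)
              (show A.card ≤ d - 1 by omega)
              (show d - 1 ≤ univ.card by rw [card_univ, Fintype.card_fin]; omega)
          obtain ⟨F, hF, hBF⟩ := hL B hBcard
          exact ⟨F, hF, hAB.trans hBF⟩
      have h2 : (nonfaceComplex (generated 𝔉)).filter (fun A => A.card = k)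
          = univ.filter (fun A : Finset (Fin n) => A.card = k) := by
        ext A
        simp only [mem_filter, hnf, mem_univ, true_and, and_iff_right_iff_imp]
        intro hAk F hF hFA
        have := card_le_card hFA
        rw [hcard F hF, hAk] at this
        omega
      rw [h1, h2]
    · -- k = d
      subst hk
      rw [hG1d, hG2dcard]
      omega
    · -- k > d : both sides empty
      have h1 : (generated 𝔉).filter (fun A => A.card = k) = ∅ := by
        ext A
        simp only [mem_filter, mem_generated, notMem_empty, iff_false, not_and]
        rintro ⟨F, hF, hAF⟩ hAk
        have := card_le_card hAF
        rw [hcard F hF, hAk] at this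
        omega
      have h2 : (nonfaceComplex (generated 𝔉)).filter (fun A => A.card = k) = ∅ := by
        ext A
        simp only [mem_filter, hnf, notMem_empty, iff_false, not_and]
        intro hno hAk
        obtain ⟨B, hBA, hBcard⟩ := Finset.exists_subset_card_eq
          (show d + 1 ≤ A.card by omega)
        obtain ⟨F, hF, hFB⟩ := hU B hBcard
        exact hno F hF (hFB.trans hBA)
      rw [h1, h2]
end

section
/- Let d ≥ 1, let n = 2d, and let Δ be a well-distributed f-simplicial complex on [n]. Then the set of minimal nonfaces of Δ^c equals the set of facets of Δ, i.e., N(Δ^c) = F(Δ). -/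
open Finset

section aux
variable {n d : ℕ} {Δ : Finset (Finset (Fin n))}

lemma mem_cdual {A : Finset (Fin n)} :
    A ∈ cdual Δ ↔ ∃ F ∈ facets Δ, F ⊆ Aᶜ := by
  simp only [cdual, generated, mem_filter, mem_univ, true_and, mem_image]
  constructor
  · rintro ⟨B, ⟨F, hF, rfl⟩, hA⟩
    exact ⟨F, hF, le_compl_comm.mp hA⟩
  · rintro ⟨F, hF, h⟩
    exact ⟨Fᶜ, ⟨F, hF, rfl⟩, le_compl_comm.mp h⟩

lemma exists_facet {A : Finset (Fin n)} (hA : A ∈ Δ) :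
    ∃ F ∈ facets Δ, A ⊆ F := by
  obtain ⟨F, hF, hmax⟩ :=
    Finset.exists_max_image (Δ.filter (A ⊆ ·)) card ⟨A, by simp [hA]⟩
  simp only [mem_filter] at hF
  refine ⟨F, ?_, hF.2⟩
  simp only [facets, mem_filter]
  exact ⟨hF.1, fun G hG hFG =>
    Finset.eq_of_subset_of_card_le hFG (hmax G (by simp [hG, hF.2.trans hFG]))⟩

lemma card_face_le (hpure : PureDim d Δ) {A : Finset (Fin n)} (hA : A ∈ Δ) :
    A.card ≤ d := by
  obtain ⟨F, hF, hAF⟩ := exists_facet hA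
  exact (Finset.card_le_card hAF).trans (hpure F hF).le

lemma big_contains (hpure : PureDim d Δ) (hf : IsFComplex Δ)
    {A : Finset (Fin n)} (hA : d + 1 ≤ A.card) : ∃ F ∈ facets Δ, F ⊆ A := by
  have h0 : (Δ.filter fun B => B.card = A.card).card = 0 := by
    rw [Finset.card_eq_zero, Finset.filter_eq_empty_iff]
    intro B hB hc
    exact absurd (hc ▸ card_face_le hpure hB) (by omega)
  have := hf A.card
  rw [h0] at this
  by_contra h
  push_neg at h
  have hmem : A ∈ (nonfaceComplex Δ).filter fun B => B.card = A.card := by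
    refine Finset.mem_filter.mpr ⟨?_, rfl⟩
    simp only [nonfaceComplex, mem_filter, mem_univ, true_and]
    exact fun F hF hFA => h F hF hFA
  rw [Finset.card_eq_zero.mp this.symm] at hmem
  exact absurd hmem (Finset.notMem_empty _)

lemma facets_eq (hpure : PureDim d Δ) :
    facets Δ = Δ.filter fun A => A.card = d := by
  ext F
  simp only [facets, mem_filter]
  constructor
  · intro h
    exact ⟨h.1, hpure F (by simp only [facets, mem_filter]; exact h)⟩
  · rintro ⟨hF, hc⟩
    refine ⟨hF, fun G hG hFG => Finset.eq_of_subset_of_card_le hFG ?_⟩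
    rw [hc]; exact card_face_le hpure hG

lemma card_compl_facet (hn : n = 2 * d) (hpure : PureDim d Δ)
    {F : Finset (Fin n)} (hF : F ∈ facets Δ) : (Fᶜ).card = d := by
  rw [Finset.card_compl, hpure F hF]
  simp [hn]; omega

lemma not_both (hn : n = 2 * d) (hpure : PureDim d Δ)
    (hwd : facets Δ ∩ facets (cdual Δ) = ∅)
    {F : Finset (Fin n)} (hF : F ∈ facets Δ) (hFc : Fᶜ ∈ facets Δ) : False := by
  have hFd : F ∈ facets (cdual Δ) := by
    simp only [facets, mem_filter]
    constructor
    · exact mem_cdual.mpr ⟨Fᶜ, hFc, subset_rfl⟩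
    · intro G hG hFG
      obtain ⟨H, hH, hGH⟩ := mem_cdual.mp hG
      have h2 := Finset.card_le_card (le_compl_comm.mp hGH)
      rw [Finset.card_compl, Fintype.card_fin, hpure H hH] at h2
      have : G.card ≤ F.card := by rw [hpure F hF]; omega
      exact Finset.eq_of_subset_of_card_le hFG this
  have := Finset.eq_empty_iff_forall_notMem.mp hwd F
  exact this (Finset.mem_inter.mpr ⟨hF, hFd⟩)

lemma compl_nonface (hn : n = 2 * d) (hpure : PureDim d Δ)
    (hwd : facets Δ ∩ facets (cdual Δ) = ∅)
    {F : Finset (Fin n)} (hF : F ∈ facets Δ) : Fᶜ ∈ nonfaceComplex Δ := by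
  simp only [nonfaceComplex, mem_filter, mem_univ, true_and]
  intro G hG hGF
  have : G = Fᶜ := Finset.eq_of_subset_of_card_le hGF
    (by rw [hpure G hG, card_compl_facet hn hpure hF])
  exact not_both hn hpure hwd hF (this ▸ hG)

lemma nonface_d_is_compl_facet (hn : n = 2 * d) (hpure : PureDim d Δ)
    (hf : IsFComplex Δ) (hwd : facets Δ ∩ facets (cdual Δ) = ∅)
    {A : Finset (Fin n)} (hA : A ∈ nonfaceComplex Δ) (hc : A.card = d) :
    Aᶜ ∈ facets Δ := by
  set T := (nonfaceComplex Δ).filter (fun B => B.card = d) with hT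
  have himg : (facets Δ).image (fun F => Fᶜ) ⊆ T := by
    intro B hB
    obtain ⟨F, hF, rfl⟩ := Finset.mem_image.mp hB
    simp only [hT, mem_filter]
    exact ⟨compl_nonface hn hpure hwd hF, card_compl_facet hn hpure hF⟩
  have hcardim : ((facets Δ).image (fun F => Fᶜ)).card = T.card := by
    rw [Finset.card_image_of_injective _ compl_injective, facets_eq hpure]
    exact hf d
  have heq : (facets Δ).image (fun F => Fᶜ) = T :=
    Finset.eq_of_subset_of_card_le himg hcardim.ge
  have hAT : A ∈ T := by simp [hT, mem_filter, hA, hc]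
  rw [← heq, Finset.mem_image] at hAT
  obtain ⟨F, hF, hFA⟩ := hAT
  have : F = Aᶜ := by rw [← hFA, compl_compl]
  exact this ▸ hF

end aux

/-- for a well-distributed `f`-simplicial complex `Δ` (`n = 2d`, `Δ` pure
`(d-1)`-dimensional, `F(Δ) ∩ F(Δ^c) = ∅`), we have `N(Δ^c) = F(Δ)`. -/
theorem stmt2 {d n : ℕ} (hd : 1 ≤ d) (hn : n = 2 * d)
    (Δ : Finset (Finset (Fin n))) (hΔ : IsComplex Δ) (hpure : PureDim d Δ)
    (hf : IsFComplex Δ) (hwd : facets Δ ∩ facets (cdual Δ) = ∅) :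
    minNonfaces (cdual Δ) = facets Δ := by
  ext A
  simp only [minNonfaces, mem_filter, mem_univ, true_and]
  constructor
  · rintro ⟨hA, hmin⟩
    -- A ∉ cdual Δ : Aᶜ contains no facet
    have hnc : ∀ F ∈ facets Δ, ¬ F ⊆ Aᶜ := by
      intro F hF hFA
      exact hA (mem_cdual.mpr ⟨F, hF, hFA⟩)
    -- card A ≥ d
    have hcard : d ≤ A.card := by
      by_contra h
      push_neg at h
      have : d + 1 ≤ (Aᶜ).card := by
        rw [Finset.card_compl]
        simp only [Fintype.card_fin]
        omega
      obtain ⟨F, hF, hFA⟩ := big_contains hpure hf this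
      exact hnc F hF hFA
    rcases eq_or_lt_of_le hcard with hcd | hcd
    · -- card A = d
      have hAnf : Aᶜ ∈ nonfaceComplex Δ := by
        simp only [nonfaceComplex, mem_filter, mem_univ, true_and]
        exact hnc
      have : (Aᶜ)ᶜ ∈ facets Δ := nonface_d_is_compl_facet hn hpure hf hwd hAnf
        (by rw [Finset.card_compl]; simp [hn]; omega)
      rwa [compl_compl] at this
    · -- card A > d : contradiction
      exfalso
      obtain ⟨G, hG, hGA⟩ := big_contains hpure hf hcd
      have hGss : G ⊂ A := lt_of_le_of_ne hGA (by
        intro h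
        have := hpure G hG
        rw [h] at this
        omega)
      obtain ⟨H, hH, hHG⟩ := mem_cdual.mp (hmin G hGss)
      have hHeq : H = Gᶜ := Finset.eq_of_subset_of_card_le hHG (by
        rw [hpure H hH, Finset.card_compl, hpure G hG]
        simp only [Fintype.card_fin]
        omega)
      exact not_both hn hpure hwd hG (hHeq ▸ hH)
  · intro hF
    constructor
    · intro hmem
      obtain ⟨G, hG, hGF⟩ := mem_cdual.mp hmem
      have : G = Aᶜ := Finset.eq_of_subset_of_card_le hGF (by
        rw [hpure G hG, card_compl_facet hn hpure hF])
      exact not_both hn hpure hwd hF (this ▸ hG)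
    · intro B hB
      have hBc : d + 1 ≤ (Bᶜ).card := by
        have h1 : B.card < A.card := Finset.card_lt_card hB
        rw [hpure A hF] at h1
        rw [Finset.card_compl]
        simp only [Fintype.card_fin]
        omega
      obtain ⟨G, hG, hGB⟩ := big_contains hpure hf hBc
      exact mem_cdual.mpr ⟨G, hG, hGB⟩
end

section
/- Let d ≥ 1, let n = 2d, and let Δ be a well-distributed f-simplicial complex on [n]. Then every (d−1)-element subset of [n] is a face of Δ^c. -/
open Finset

/-- for a well-distributed `f`-simplicial complex `Δ` (`n = 2d`, pure
`(d-1)`-dimensional, `F(Δ) ∩ F(Δ^c) = ∅`), every `(d-1)`-element subset of `[n]` is a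
face of `Δ^c`. -/
theorem stmt9 {d n : ℕ} (hd : 1 ≤ d) (hn : n = 2 * d)
    (Δ : Finset (Finset (Fin n))) (hΔ : IsComplex Δ) (hpure : PureDim d Δ)
    (hf : IsFComplex Δ) (hwd : facets Δ ∩ facets (cdual Δ) = ∅) :
    ∀ A : Finset (Fin n), A.card = d - 1 → A ∈ cdual Δ := by

  intro A hA
  -- every face extends to a facet
  have hfacet : ∀ B ∈ Δ, ∃ F ∈ facets Δ, B ⊆ F := by
    intro B hB
    have hne : (Δ.filter fun G => B ⊆ G).Nonempty :=
      ⟨B, Finset.mem_filter.2 ⟨hB, subset_rfl⟩⟩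
    obtain ⟨G, hG, hGmax⟩ := Finset.exists_max_image _ Finset.card hne
    rw [Finset.mem_filter] at hG
    refine ⟨G, ?_, hG.2⟩
    refine Finset.mem_filter.2 ⟨hG.1, fun H hH hGH => ?_⟩
    have : B ⊆ H := hG.2.trans hGH
    exact Finset.eq_of_subset_of_card_le hGH
      (hGmax H (Finset.mem_filter.2 ⟨hH, this⟩))
  -- every face has card ≤ d
  have hcard : ∀ B ∈ Δ, B.card ≤ d := by
    intro B hB
    obtain ⟨F, hF, hBF⟩ := hfacet B hB
    calc B.card ≤ F.card := Finset.card_le_card hBF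
    _ = d := hpure F hF
  -- no face of card d+1
  have h1 : (Δ.filter fun B => B.card = d + 1) = ∅ := by
    rw [Finset.filter_eq_empty_iff]
    intro B hB hBd
    exact absurd (hcard B hB) (by omega)
  have h2 : ((nonfaceComplex Δ).filter fun B => B.card = d + 1) = ∅ := by
    have := hf (d + 1)
    rw [h1] at this
    exact Finset.card_eq_zero.mp this.symm
  -- Aᶜ has card d+1, so it contains a facet
  have hAc : Aᶜ.card = d + 1 := by
    have := Finset.card_compl A
    rw [hA] at this
    simp only [Fintype.card_fin] at this
    omega
  have : Aᶜ ∉ nonfaceComplex Δ := by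
    intro h
    have : Aᶜ ∈ (nonfaceComplex Δ).filter fun B => B.card = d + 1 :=
      Finset.mem_filter.2 ⟨h, hAc⟩
    rw [h2] at this
    exact absurd this (Finset.notMem_empty _)
  simp only [nonfaceComplex, Finset.mem_filter, Finset.mem_univ, true_and,
    not_forall, not_not] at this
  obtain ⟨F, hF, hFA⟩ := this
  refine Finset.mem_filter.2 ⟨Finset.mem_univ _, ⟨Fᶜ, Finset.mem_image_of_mem _ hF, ?_⟩⟩
  intro x hx
  simp only [Finset.mem_compl]
  intro hxF
  have := hFA hxF
  simp only [Finset.mem_compl] at this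
  exact this hx
end

section
/- Let d ≥ 1, let n = 2d, and let Δ be a well-distributed f-simplicial complex on [n]. Then every subset U of [n] with |U| > d contains some facet of Δ; consequently, no subset of [n] of cardinality greater than d is a minimal nonface of Δ^c. -/
open Finset

lemma face_le_facet {n : ℕ} {Δ : Finset (Finset (Fin n))} {A : Finset (Fin n)}
    (hA : A ∈ Δ) : ∃ F ∈ facets Δ, A ⊆ F := by
  obtain ⟨F, hF, hmax⟩ := (Δ.filter fun B => A ⊆ B).exists_maximal ⟨A, by simp [hA]⟩
  rw [mem_filter] at hF
  refine ⟨F, ?_, hF.2⟩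
  rw [facets, mem_filter]
  refine ⟨hF.1, fun G hG hFG => ?_⟩
  by_contra hne
  exact hne (le_antisymm hFG (hmax (mem_filter.2 ⟨hG, hF.2.trans hFG⟩) hFG))

/-- for a well-distributed `f`-simplicial complex `Δ` (`n = 2d`, pure
`(d-1)`-dimensional, `F(Δ) ∩ F(Δ^c) = ∅`), every subset `U` of `[n]` with `|U| > d`
contains a facet of `Δ`; consequently no such `U` is a minimal nonface of `Δ^c`. -/
theorem stmt10 {d n : ℕ} (hd : 1 ≤ d) (hn : n = 2 * d)
    (Δ : Finset (Finset (Fin n))) (hΔ : IsComplex Δ) (hpure : PureDim d Δ)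
    (hf : IsFComplex Δ) (hwd : facets Δ ∩ facets (cdual Δ) = ∅) :
    (∀ U : Finset (Fin n), d < U.card → ∃ F ∈ facets Δ, F ⊆ U) ∧
      ∀ U : Finset (Fin n), d < U.card → U ∉ minNonfaces (cdual Δ) := by
  have hcard : ∀ A ∈ Δ, A.card ≤ d := by
    intro A hA
    obtain ⟨F, hF, hAF⟩ := face_le_facet hA
    exact (card_le_card hAF).trans_eq (hpure F hF)
  have part1 : ∀ U : Finset (Fin n), d < U.card → ∃ F ∈ facets Δ, F ⊆ U := by
    intro U hU
    by_contra h
    push_neg at h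
    have h1 : (Δ.filter fun A => A.card = U.card) = ∅ := by
      rw [filter_eq_empty_iff]
      intro A hA hAc
      exact absurd (hAc ▸ hcard A hA) (not_le.2 hU)
    have h2 : U ∈ (nonfaceComplex Δ).filter fun A => A.card = U.card := by
      rw [mem_filter, nonfaceComplex, mem_filter]
      exact ⟨⟨mem_univ U, fun F hF => h F hF⟩, rfl⟩
    have := hf U.card
    rw [h1] at this
    simp only [card_empty] at this
    exact absurd (card_pos.2 ⟨U, h2⟩) (by omega)
  refine ⟨part1, fun U hU hmem => ?_⟩
  rw [minNonfaces, mem_filter] at hmem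
  obtain ⟨F, hF, hFU⟩ := part1 U hU
  have hFd : F.card = d := hpure F hF
  have hFssU : F ⊂ U := ssubset_of_subset_of_ne hFU (fun h => by rw [h] at hFd; omega)
  have hFc : F ∈ cdual Δ := hmem.2.2 F hFssU
  rw [cdual, generated, mem_filter] at hFc
  obtain ⟨-, G, hG, hFG⟩ := hFc
  rw [mem_image] at hG
  obtain ⟨G, hG, rfl⟩ := hG
  have hGc : Gᶜ.card = d := by
    rw [card_compl, hpure G hG, Fintype.card_fin]; omega
  have hFeq : F = Gᶜ := eq_of_subset_of_card_le hFG (by omega)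
  have hcd : ∀ A ∈ cdual Δ, A.card ≤ d := by
    intro A hA
    rw [cdual, generated, mem_filter] at hA
    obtain ⟨-, H, hH, hAH⟩ := hA
    rw [mem_image] at hH
    obtain ⟨H, hH, rfl⟩ := hH
    calc A.card ≤ Hᶜ.card := card_le_card hAH
    _ = d := by rw [card_compl, hpure H hH, Fintype.card_fin]; omega
  have hFfc : F ∈ facets (cdual Δ) := by
    rw [facets, mem_filter]
    refine ⟨?_, fun H hH hFH => ?_⟩
    · rw [cdual, generated, mem_filter]
      exact ⟨mem_univ F, Gᶜ, mem_image_of_mem _ hG, hFeq.le⟩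
    · exact eq_of_subset_of_card_le hFH (by have := hcd H hH; omega)
  have : F ∈ facets Δ ∩ facets (cdual Δ) := mem_inter.2 ⟨hF, hFfc⟩
  rw [hwd] at this
  exact absurd this (notMem_empty F)
end
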